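/- If U is a C¹ function on [0,∞), decreasing, with U'' + f(U) = 0 on (0,L), U'' + g(U) = 0 on (L,∞), U'(0) = 0, U > 0, and U(∞) = 0, and if on (L, ∞) the trajectory of U lies on the curve p² = −2∫₀^q g(v)dv, then U(0) < θ*. -/

import Mathlib

open Filter

open Set in
lemma deriv_tendsto_right (u u' w : ℝ → ℝ) {b c C : ℝ} (hbc : b < c)
    (hu : ∀ x ∈ Set.Icc b c, HasDerivAt u (u' x) x)
    (hu' : ∀ x ∈ Set.Ioo b c, HasDerivAt u' (w x) x)
    (hw : ∀ x ∈ Set.Ioo b c, |w x| ≤ C) :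
    Filter.Tendsto u' (nhdsWithin b (Set.Ioo b c)) (nhds (u' b)) := by
  have hC : 0 ≤ C := le_trans (abs_nonneg _) (hw ((b+c)/2) ⟨by linarith, by linarith⟩)
  rw [Metric.tendsto_nhdsWithin_nhds]
  intro ε hε
  have hslope : Tendsto (slope u b) (nhdsWithin b (Set.Ioi b)) (nhds (u' b)) :=
    (hasDerivAt_iff_tendsto_slope.mp (hu b ⟨le_refl b, hbc.le⟩)).mono_left
      (nhdsWithin_mono _ fun y hy => ne_of_gt hy)
  rw [Metric.tendsto_nhdsWithin_nhds] at hslope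
  obtain ⟨δ₁, hδ₁, hs⟩ := hslope (ε/2) (by positivity)
  refine ⟨min δ₁ (ε/(2*(C+1))), by positivity, ?_⟩
  intro x hx hdx
  have hbx : b < x := hx.1
  have hd1 : x - b < δ₁ := by
    rw [Real.dist_eq, abs_of_pos (by linarith)] at hdx
    exact lt_of_lt_of_le hdx (min_le_left _ _)
  have hd2 : x - b < ε/(2*(C+1)) := by
    rw [Real.dist_eq, abs_of_pos (by linarith)] at hdx
    exact lt_of_lt_of_le hdx (min_le_right _ _)
  obtain ⟨ξ, hξ, hξs⟩ := exists_hasDerivAt_eq_slope u u' hbx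
    (fun y hy => (hu y ⟨hy.1, le_trans hy.2 hx.2.le⟩).continuousAt.continuousWithinAt)
    (fun y hy => hu y ⟨hy.1.le, hy.2.le.trans hx.2.le⟩)
  have hslopeval : dist (slope u b x) (u' b) < ε/2 := by
    apply hs (by exact hbx : x ∈ Set.Ioi b)
    rw [Real.dist_eq, abs_of_pos (by linarith)]
    exact hd1
  have hξb : dist (u' ξ) (u' b) < ε/2 := by
    have heq : slope u b x = u' ξ := by rw [slope_def_field, hξs]
    rwa [heq] at hslopeval
  have hlip : ‖u' x - u' ξ‖ ≤ C * ‖x - ξ‖ := by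
    apply Convex.norm_image_sub_le_of_norm_hasDerivWithin_le (f := u') (f' := w)
      (s := Set.Icc ξ x)
      (fun y hy => (hu' y ⟨lt_of_lt_of_le hξ.1 hy.1, lt_of_le_of_lt hy.2 hx.2⟩).hasDerivWithinAt)
      (fun y hy => by
        rw [Real.norm_eq_abs]
        exact hw y ⟨lt_of_lt_of_le hξ.1 hy.1, lt_of_le_of_lt hy.2 hx.2⟩)
      (convex_Icc _ _) ⟨le_refl _, hξ.2.le⟩ ⟨hξ.2.le, le_refl _⟩
  have hCd : C * ‖x - ξ‖ < ε/2 := by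
    rw [Real.norm_eq_abs, abs_of_nonneg (by linarith [hξ.2] : (0:ℝ) ≤ x - ξ)]
    have h1 : x - ξ ≤ x - b := by linarith [hξ.1]
    have : C * (x - ξ) ≤ C * (ε/(2*(C+1))) := by nlinarith
    have h2 : C * (ε/(2*(C+1))) < ε/2 := by
      rw [mul_div_assoc', div_lt_div_iff₀ (by linarith) (by norm_num)]
      nlinarith
    linarith
  calc dist (u' x) (u' b) ≤ dist (u' x) (u' ξ) + dist (u' ξ) (u' b) := dist_triangle _ _ _
    _ < ε/2 + ε/2 := by
        apply add_lt_add_of_le_of_lt _ hξb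
        rw [Real.dist_eq]
        calc |u' x - u' ξ| ≤ C * ‖x - ξ‖ := by rw [← Real.norm_eq_abs]; exact hlip
          _ ≤ ε/2 := hCd.le
    _ = ε := by ring

open Set in
lemma deriv_tendsto_left (u u' w : ℝ → ℝ) {a b C : ℝ} (hab : a < b)
    (hu : ∀ x ∈ Set.Icc a b, HasDerivAt u (u' x) x)
    (hu' : ∀ x ∈ Set.Ioo a b, HasDerivAt u' (w x) x)
    (hw : ∀ x ∈ Set.Ioo a b, |w x| ≤ C) :
    Filter.Tendsto u' (nhdsWithin b (Set.Ioo a b)) (nhds (u' b)) := by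
  have hC : 0 ≤ C := le_trans (abs_nonneg _) (hw ((a+b)/2) ⟨by linarith, by linarith⟩)
  rw [Metric.tendsto_nhdsWithin_nhds]
  intro ε hε
  have hslope : Tendsto (slope u b) (nhdsWithin b (Set.Iio b)) (nhds (u' b)) :=
    (hasDerivAt_iff_tendsto_slope.mp (hu b ⟨hab.le, le_refl b⟩)).mono_left
      (nhdsWithin_mono _ fun y hy => ne_of_lt hy)
  rw [Metric.tendsto_nhdsWithin_nhds] at hslope
  obtain ⟨δ₁, hδ₁, hs⟩ := hslope (ε/2) (by positivity)
  refine ⟨min δ₁ (ε/(2*(C+1))), by positivity, ?_⟩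
  intro x hx hdx
  have hxb : x < b := hx.2
  have hd : b - x < min δ₁ (ε/(2*(C+1))) := by
    rwa [Real.dist_eq, abs_of_neg (by linarith), neg_sub] at hdx
  have hd1 : b - x < δ₁ := lt_of_lt_of_le hd (min_le_left _ _)
  have hd2 : b - x < ε/(2*(C+1)) := lt_of_lt_of_le hd (min_le_right _ _)
  obtain ⟨ξ, hξ, hξs⟩ := exists_hasDerivAt_eq_slope u u' hxb
    (fun y hy => (hu y ⟨le_trans hx.1.le hy.1, hy.2⟩).continuousAt.continuousWithinAt)
    (fun y hy => hu y ⟨le_trans hx.1.le hy.1.le, hy.2.le⟩)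
  have hslopeval : dist (slope u b x) (u' b) < ε/2 := by
    apply hs (by exact hxb : x ∈ Set.Iio b)
    rw [Real.dist_eq, abs_of_neg (by linarith), neg_sub]
    exact hd1
  have hξb : dist (u' ξ) (u' b) < ε/2 := by
    have heq : slope u b x = u' ξ := by
      rw [slope_def_field, hξs]
      rw [div_eq_div_iff (sub_ne_zero.mpr (ne_of_lt hxb)) (sub_ne_zero.mpr (ne_of_gt hxb))]
      ring
    rwa [heq] at hslopeval
  have hlip : ‖u' x - u' ξ‖ ≤ C * ‖x - ξ‖ := by
    apply Convex.norm_image_sub_le_of_norm_hasDerivWithin_le (f := u') (f' := w)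
      (s := Set.Icc x ξ)
      (fun y hy => (hu' y ⟨lt_of_lt_of_le hx.1 hy.1, lt_of_le_of_lt hy.2 hξ.2⟩).hasDerivWithinAt)
      (fun y hy => by
        rw [Real.norm_eq_abs]
        exact hw y ⟨lt_of_lt_of_le hx.1 hy.1, lt_of_le_of_lt hy.2 hξ.2⟩)
      (convex_Icc _ _) ⟨hξ.1.le, le_refl _⟩ ⟨le_refl _, hξ.1.le⟩
  have hCd : C * ‖x - ξ‖ < ε/2 := by
    rw [Real.norm_eq_abs, abs_of_nonpos (by linarith [hξ.1] : x - ξ ≤ 0)]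
    have h1 : -(x - ξ) ≤ b - x := by linarith [hξ.2]
    have : C * (-(x - ξ)) ≤ C * (ε/(2*(C+1))) := by
      apply mul_le_mul_of_nonneg_left _ hC
      linarith
    have h2 : C * (ε/(2*(C+1))) < ε/2 := by
      rw [mul_div_assoc', div_lt_div_iff₀ (by linarith) (by norm_num)]
      nlinarith
    linarith
  calc dist (u' x) (u' b) ≤ dist (u' x) (u' ξ) + dist (u' ξ) (u' b) := dist_triangle _ _ _
    _ < ε/2 + ε/2 := by
        apply add_lt_add_of_le_of_lt _ hξb
        rw [Real.dist_eq]
        calc |u' x - u' ξ| ≤ C * ‖x - ξ‖ := by rw [← Real.norm_eq_abs]; exact hlip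
          _ ≤ ε/2 := hCd.le
    _ = ε := by ring


theorem stmt_19 (f g : ℝ → ℝ) (θ θs L : ℝ) (hL : 0 < L)
    (hf : Continuous f) (hg : Continuous g)
    (hf0 : f 0 = 0) (hf1 : f 1 = 0)
    (hfpos : ∀ u ∈ Set.Ioo (0:ℝ) 1, 0 < f u)
    (hθ : θ ∈ Set.Ioo (0:ℝ) 1) (hθs : θs ∈ Set.Ioo θ 1)
    (hg0 : g 0 = 0) (hgθ : g θ = 0) (hg1 : g 1 = 0)
    (hgneg : ∀ u ∈ Set.Ioo 0 θ, g u < 0)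
    (hgpos : ∀ u ∈ Set.Ioo θ 1, 0 < g u)
    (hbal : (∫ s in (0:ℝ)..θs, g s) = 0)
    (hlt : ∀ u ∈ Set.Ioo (0:ℝ) 1, g u < f u)
    (U U' : ℝ → ℝ)
    (hderiv : ∀ x ∈ Set.Ici (0:ℝ), HasDerivAt U (U' x) x)
    (hode1 : ∀ x ∈ Set.Ioo 0 L, HasDerivAt U' (-(f (U x))) x)
    (hode2 : ∀ x ∈ Set.Ioi L, HasDerivAt U' (-(g (U x))) x)
    (hN : U' 0 = 0)
    (hpos : ∀ x, 0 ≤ x → 0 < U x)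
    (hdec : StrictAntiOn U (Set.Ici 0))
    (hdecay : Tendsto U atTop (nhds 0))
    (htraj : ∀ x, L < x → (U' x) ^ 2 = -2 * ∫ v in (0:ℝ)..(U x), g v) :
    U 0 < θs := by
  set G : ℝ → ℝ := fun q => ∫ v in (0:ℝ)..q, g v with hGdef
  have hGd : ∀ q, HasDerivAt G (g q) q := fun q => (hg.integral_hasStrictDerivAt 0 q).hasDerivAt
  have hGc : Continuous G := continuous_iff_continuousAt.mpr fun q => (hGd q).continuousAt
  have hθpos : 0 < θ := hθ.1
  have hθslt1 : θs < 1 := hθs.2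
  have hθθs : θ < θs := hθs.1
  -- G q = ∫ θs..q for comparison
  have hGsub : ∀ q, G q = ∫ v in θs..q, g v := by
    intro q
    have hi1 : IntervalIntegrable g MeasureTheory.volume 0 θs := hg.intervalIntegrable 0 θs
    have hi2 : IntervalIntegrable g MeasureTheory.volume θs q := hg.intervalIntegrable θs q
    have := intervalIntegral.integral_add_adjacent_intervals hi1 hi2
    simp only [hGdef]
    rw [← this, hbal, zero_add]
  have hGq_pos : ∀ q, θs < q → q ≤ 1 → 0 < G q := by
    intro q h1 h2
    rw [hGsub]
    have hint : IntervalIntegrable g MeasureTheory.volume θs q := hg.intervalIntegrable θs q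
    exact intervalIntegral.intervalIntegral_pos_of_pos_on hint
      (fun v hv => hgpos v ⟨lt_trans hθθs hv.1, lt_of_lt_of_le hv.2 h2⟩) h1
  have hGq_nonneg : ∀ q, θs ≤ q → q < 1 → 0 ≤ G q := by
    intro q h1 h2
    rcases eq_or_lt_of_le h1 with h | h
    · rw [← h, hGsub]; simp
    · exact (hGq_pos q h (le_of_lt h2)).le
  have hUcont : ∀ x, 0 ≤ x → ContinuousAt U x := fun x hx => (hderiv x hx).continuousAt
  have hU'np : ∀ x, 0 ≤ x → U' x ≤ 0 := by
    intro x hx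
    have ht : Tendsto (slope U x) (nhdsWithin x (Set.Ioi x)) (nhds (U' x)) :=
      (hasDerivAt_iff_tendsto_slope.mp (hderiv x hx)).mono_left
        (nhdsWithin_mono _ fun y hy => ne_of_gt hy)
    refine le_of_tendsto ht ?_
    filter_upwards [self_mem_nhdsWithin] with y hy
    rw [slope_def_field]
    apply div_nonpos_of_nonpos_of_nonneg
    · have : U y < U x := hdec hx (le_trans hx (le_of_lt hy)) hy
      linarith
    · simp only [Set.mem_Ioi] at hy; linarith
  -- U L ≤ θs
  have hUL : U L ≤ θs := by
    by_contra hcon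
    push_neg at hcon
    set q := (θs + min (U L) 1)/2 with hqdef
    have hmin : θs < min (U L) 1 := lt_min hcon hθslt1
    have hq1 : θs < q := by rw [hqdef]; linarith
    have hq2 : q < U L := by
      have := min_le_left (U L) 1
      rw [hqdef]; linarith
    have hq3 : q < 1 := by
      have := min_le_right (U L) 1
      rw [hqdef]; linarith
    have hGq : 0 < G q := hGq_pos q hq1 hq3.le
    have hqpos : 0 < q := lt_trans (lt_trans hθpos hθθs) hq1
    obtain ⟨T, hT1, hT2⟩ : ∃ T, L < T ∧ U T < q := by
      have h1 : ∀ᶠ x in atTop, U x < q := hdecay.eventually_lt_const hqpos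
      have h2 : ∀ᶠ x in atTop, L < x := eventually_gt_atTop L
      obtain ⟨T, hT⟩ := (h2.and h1).exists
      exact ⟨T, hT.1, hT.2⟩
    have hcontU : ContinuousOn U (Set.Icc L T) := fun y hy =>
      (hUcont y (le_trans hL.le hy.1)).continuousWithinAt
    have hmem : q ∈ Set.Icc (U T) (U L) := ⟨hT2.le, hq2.le⟩
    obtain ⟨x, hxmem, hxq⟩ := intermediate_value_Icc' hT1.le hcontU hmem
    have hxL : L < x := by
      rcases eq_or_lt_of_le hxmem.1 with h | h
      · exfalso; rw [← h] at hxq; linarith [hxq ▸ hq2]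
      · exact h
    have := htraj x hxL
    rw [hxq] at this
    nlinarith [sq_nonneg (U' x)]
  -- bounds for second derivatives
  obtain ⟨C₁, hC₁⟩ : ∃ C, ∀ x ∈ Set.Icc (0:ℝ) L, ‖-(f (U x))‖ ≤ C := by
    apply IsCompact.exists_bound_of_continuousOn isCompact_Icc
    exact ((hf.comp_continuousOn (fun y hy => (hUcont y hy.1).continuousWithinAt))).neg
  obtain ⟨C₂, hC₂⟩ : ∃ C, ∀ x ∈ Set.Icc L (L+1), ‖-(g (U x))‖ ≤ C := by
    apply IsCompact.exists_bound_of_continuousOn isCompact_Icc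
    exact ((hg.comp_continuousOn (fun y hy => (hUcont y (le_trans hL.le hy.1)).continuousWithinAt))).neg
  -- boundary limits of U'
  have t0 : Tendsto U' (nhdsWithin 0 (Set.Ioo 0 L)) (nhds (U' 0)) :=
    deriv_tendsto_right U U' (fun x => -(f (U x))) hL
      (fun x hx => hderiv x hx.1) hode1
      (fun x hx => by rw [← Real.norm_eq_abs]; exact hC₁ x ⟨hx.1.le, hx.2.le⟩)
  have tLl : Tendsto U' (nhdsWithin L (Set.Ioo 0 L)) (nhds (U' L)) :=
    deriv_tendsto_left U U' (fun x => -(f (U x))) hL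
      (fun x hx => hderiv x hx.1) hode1
      (fun x hx => by rw [← Real.norm_eq_abs]; exact hC₁ x ⟨hx.1.le, hx.2.le⟩)
  have tLr : Tendsto U' (nhdsWithin L (Set.Ioo L (L+1))) (nhds (U' L)) :=
    deriv_tendsto_right U U' (fun x => -(g (U x))) (by linarith)
      (fun x hx => hderiv x (le_trans hL.le hx.1)) (fun x hx => hode2 x hx.1)
      (fun x hx => by rw [← Real.norm_eq_abs]; exact hC₂ x ⟨hx.1.le, hx.2.le⟩)
  -- trajectory identity at L
  have hEL : (U' L)^2 = -2 * G (U L) := by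
    haveI : (nhdsWithin L (Set.Ioo L (L+1))).NeBot := by
      rw [nhdsWithin_Ioo_eq_nhdsGT (by linarith : L < L + 1)]
      infer_instance
    have h1 : Tendsto (fun x => (U' x)^2) (nhdsWithin L (Set.Ioo L (L+1))) (nhds ((U' L)^2)) :=
      tLr.pow 2
    have hUL' : Tendsto U (nhdsWithin L (Set.Ioo L (L+1))) (nhds (U L)) :=
      (hUcont L hL.le).continuousWithinAt
    have h2 : Tendsto (fun x => -2 * G (U x)) (nhdsWithin L (Set.Ioo L (L+1)))
        (nhds (-2 * G (U L))) := tendsto_const_nhds.mul ((hGc.tendsto _).comp hUL')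
    have heq : ∀ᶠ x in nhdsWithin L (Set.Ioo L (L+1)), (fun x => (U' x)^2) x
        = (fun x => -2 * G (U x)) x := by
      filter_upwards [self_mem_nhdsWithin] with x hx
      exact htraj x hx.1
    exact tendsto_nhds_unique (h1.congr' heq) h2
  -- energy function
  set W : ℝ → ℝ := fun x => (U' x)^2/2 + G (U x) with hWdef
  have hWL : W L = 0 := by rw [hWdef]; simp only; rw [hEL]; ring
  have hW0 : W 0 = G (U 0) := by rw [hWdef]; simp [hN]
  -- continuity of U' on Icc 0 L
  have hU'cont : ContinuousOn U' (Set.Icc 0 L) := by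
    intro x hx
    rcases eq_or_lt_of_le hx.1 with h0 | h0
    · subst h0
      have : ContinuousWithinAt U' (Set.Ioi 0) 0 := by
        rw [ContinuousWithinAt, ← nhdsWithin_Ioo_eq_nhdsGT hL]
        exact t0
      exact (continuousWithinAt_Ioi_iff_Ici.mp this).mono Set.Icc_subset_Ici_self
    rcases eq_or_lt_of_le hx.2 with hL0 | hL0
    · subst hL0
      have : ContinuousWithinAt U' (Set.Iio x) x := by
        rw [ContinuousWithinAt, ← nhdsWithin_Ioo_eq_nhdsLT h0]
        exact tLl
      exact (continuousWithinAt_Iio_iff_Iic.mp this).mono Set.Icc_subset_Iic_self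
    · exact (hode1 x ⟨h0, hL0⟩).continuousAt.continuousWithinAt
  have hUcontIcc : ContinuousOn U (Set.Icc 0 L) := fun y hy =>
    (hUcont y hy.1).continuousWithinAt
  have hWcont : ContinuousOn W (Set.Icc 0 L) := by
    apply ContinuousOn.add
    · exact (hU'cont.pow 2).div_const 2
    · exact hGc.comp_continuousOn hUcontIcc
  -- derivative of W on (0, L)
  have hWderiv : ∀ x ∈ Set.Ioo 0 L, HasDerivAt W (U' x * (g (U x) - f (U x))) x := by
    intro x hx
    have h1 : HasDerivAt (fun y => (U' y)^2/2) ((2 * U' x ^ 1 * (-(f (U x))))/2) x :=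
      ((hode1 x hx).pow 2).div_const 2
    have h2 : HasDerivAt (fun y => G (U y)) (g (U x) * U' x) x :=
      (hGd (U x)).comp x (hderiv x hx.1.le)
    have h3 := h1.add h2
    convert h3 using 1
    · rfl
    · rfl
    · rfl
    ring
  have hWderiv' : ∀ x ∈ Set.Ioo 0 L, deriv W x = U' x * (g (U x) - f (U x)) :=
    fun x hx => (hWderiv x hx).deriv
  rcases lt_or_ge (U 0) 1 with hU01 | hU01
  · -- main case : U 0 < 1
    have hDnn : ∀ x ∈ Set.Ioo 0 L, 0 ≤ deriv W x := by
      intro x hx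
      rw [hWderiv' x hx]
      have hUx1 : U x < 1 := lt_trans (hdec (Set.mem_Ici.mpr (le_refl (0:ℝ))) hx.1.le hx.1) hU01
      have hUx0 : 0 < U x := hpos x hx.1.le
      have hgf : g (U x) - f (U x) < 0 := sub_neg.mpr (hlt (U x) ⟨hUx0, hUx1⟩)
      nlinarith [hU'np x hx.1.le]
    have hWmono : MonotoneOn W (Set.Icc 0 L) := by
      apply monotoneOn_of_deriv_nonneg (convex_Icc 0 L) hWcont
      · intro x hx
        rw [interior_Icc] at hx
        exact (hWderiv x hx).differentiableAt.differentiableWithinAt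
      · intro x hx
        rw [interior_Icc] at hx
        exact hDnn x hx
    obtain ⟨ξ, hξ, hξs⟩ := exists_hasDerivAt_eq_slope U U' hL hUcontIcc
      (fun x hx => hderiv x hx.1.le)
    have hξneg : U' ξ < 0 := by
      rw [hξs]
      apply div_neg_of_neg_of_pos
      · have : U L < U 0 := hdec (Set.mem_Ici.mpr (le_refl (0:ℝ))) hL.le hL
        linarith
      · linarith
    have hcontξ : ContinuousAt U' ξ := (hode1 ξ hξ).continuousAt
    have h1 : ∀ᶠ x in nhds ξ, U' x < 0 := hcontξ.eventually_lt_const hξneg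
    have h2 : ∀ᶠ x in nhds ξ, x ∈ Set.Ioo 0 L := isOpen_Ioo.eventually_mem hξ
    obtain ⟨δ, hδ, hball⟩ := Metric.eventually_nhds_iff_ball.mp (h1.and h2)
    set a := ξ - δ/2 with hadef
    set b := ξ + δ/2 with hbdef
    have hab : a < b := by rw [hadef, hbdef]; linarith
    have hsub : ∀ y ∈ Set.Icc a b, U' y < 0 ∧ y ∈ Set.Ioo 0 L := by
      intro y hy
      apply hball
      rw [Metric.mem_ball, Real.dist_eq, abs_lt]
      rw [hadef] at hy; rw [hbdef] at hy
      constructor <;> [linarith [hy.1]; linarith [hy.2]]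
    have haI : a ∈ Set.Ioo 0 L := (hsub a ⟨le_refl a, hab.le⟩).2
    have hbI : b ∈ Set.Ioo 0 L := (hsub b ⟨hab.le, le_refl b⟩).2
    have hIccsub : Set.Icc a b ⊆ Set.Icc 0 L := fun y hy =>
      ⟨le_trans haI.1.le hy.1, le_trans hy.2 hbI.2.le⟩
    have hWstrict : StrictMonoOn W (Set.Icc a b) := by
      apply strictMonoOn_of_deriv_pos (convex_Icc a b) (hWcont.mono hIccsub)
      intro x hx
      rw [interior_Icc] at hx
      have hx' : x ∈ Set.Icc a b := ⟨hx.1.le, hx.2.le⟩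
      obtain ⟨hU'x, hxIoo⟩ := hsub x hx'
      rw [hWderiv' x hxIoo]
      have hUx1 : U x < 1 := lt_trans (hdec (Set.mem_Ici.mpr (le_refl (0:ℝ))) hxIoo.1.le hxIoo.1) hU01
      have hUx0 : 0 < U x := hpos x hxIoo.1.le
      have hgf : g (U x) - f (U x) < 0 := sub_neg.mpr (hlt (U x) ⟨hUx0, hUx1⟩)
      exact mul_pos_of_neg_of_neg hU'x hgf
    have c1 : W 0 ≤ W a := hWmono ⟨le_refl 0, hL.le⟩ ⟨haI.1.le, haI.2.le⟩ haI.1.le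
    have c2 : W a < W b := hWstrict ⟨le_refl a, hab.le⟩ ⟨hab.le, le_refl b⟩ hab
    have c3 : W b ≤ W L := hWmono ⟨hbI.1.le, hbI.2.le⟩ ⟨hL.le, le_refl L⟩ hbI.2.le
    have hG0 : G (U 0) < 0 := by
      rw [← hW0]; rw [hWL] at c3; linarith
    by_contra hcon
    push_neg at hcon
    have : 0 ≤ G (U 0) := hGq_nonneg _ hcon hU01
    linarith
  · -- impossible case : 1 ≤ U 0
    exfalso
    have h1 : (1:ℝ) ∈ Set.Icc (U L) (U 0) := ⟨le_trans hUL hθslt1.le, hU01⟩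
    obtain ⟨a, ha, hUa⟩ := intermediate_value_Icc' hL.le hUcontIcc h1
    have haL : a < L := by
      rcases eq_or_lt_of_le ha.2 with h | h
      · exfalso; rw [h] at hUa; rw [hUa] at hUL; linarith
      · exact h
    have hWmono : MonotoneOn W (Set.Icc a L) := by
      apply monotoneOn_of_deriv_nonneg (convex_Icc a L)
        (hWcont.mono (Set.Icc_subset_Icc ha.1 (le_refl L)))
      · intro x hx
        rw [interior_Icc] at hx
        have hxI : x ∈ Set.Ioo 0 L := ⟨lt_of_le_of_lt ha.1 hx.1, hx.2⟩
        exact (hWderiv x hxI).differentiableAt.differentiableWithinAt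
      · intro x hx
        rw [interior_Icc] at hx
        have hxI : x ∈ Set.Ioo 0 L := ⟨lt_of_le_of_lt ha.1 hx.1, hx.2⟩
        rw [hWderiv' x hxI]
        have hUx1 : U x < 1 := by
          rw [← hUa]
          exact hdec ha.1 (le_trans ha.1 hx.1.le) hx.1
        have hUx0 : 0 < U x := hpos x hxI.1.le
        have hgf : g (U x) - f (U x) < 0 := sub_neg.mpr (hlt (U x) ⟨hUx0, hUx1⟩)
        nlinarith [hU'np x hxI.1.le]
    have hWa : W a ≤ W L := hWmono ⟨le_refl a, haL.le⟩ ⟨haL.le, le_refl L⟩ haL.le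
    have hG1 : 0 < G 1 := hGq_pos 1 hθslt1 (le_refl 1)
    have hWa' : W a = (U' a)^2/2 + G 1 := by rw [hWdef]; simp only; rw [hUa]
    rw [hWa', hWL] at hWa
    nlinarith [sq_nonneg (U' a)]
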